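/- (Soundness identity) Let ρ be a density matrix on ⊗_{j=1}^n ℂ^{d_j} (parties A_j), let {U^{(j)}_i}_{i=0}^{d_j²−1} be orthogonal unitary bases of M_{d_j}(ℂ), let W be Hermitian on ⊗_j ℂ^{d_j} with real coefficients β^{i_1…i_n}_{k_1…k_n} and density matrices τ^{(j)}_k such that W = Σ_{k} β^{i}_{k} ⊗_j U^{(j)}_{i_j} τ^{(j)}_{k_j} U^{(j)†}_{i_j} for every tuple i, and set ω^{(j)}_k = (τ^{(j)}_k)^T. Let μ range over a finite set with probability weights π(μ), and for each μ and each j let {Ξ^{(j)}_{μ,i}}_{i=0}^{d_j²−1} be a POVM on ℂ^{d_j}⊗ℂ^{d_j} (acting on the pair A'_j⊗A_j, ancilla first). Define the manipulated probabilities P_Eve(i_1,…,i_n | k_1,…,k_n) = tr[(Σ_μ π(μ) ⊗_j Ξ^{(j)}_{μ,i_j}) · (ρ on the A parts, ⊗_j ω^{(j)}_{k_j} on the A' parts)], define N_{μ; i_1…i_n} to be the matrix on ⊗_j ℂ^{d_j} (the A' parts) obtained by partially tracing out all A parts of (⊗_j Ξ^{(j)}_{μ,i_j}) · (ρ placed on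 the A parts and identity on the A' parts), and define ς = Σ_μ π(μ) Σ_{i_1,…,i_n} (⊗_j (U^{(j)}_{i_j})^*) N_{μ;i_1…i_n} (⊗_j (U^{(j)}_{i_j})^T). Then Σ_{i,k} β^{i}_{k} P_Eve(i|k) = tr(W^T ς) = tr(W ς^T). -/

import Mathlib

open Matrix BigOperators
open scoped ComplexOrder Kronecker

noncomputable section

/-- A density matrix: positive semidefinite with trace one. -/
def IsDensity {ι : Type*} [Fintype ι] (ρ : Matrix ι ι ℂ) : Prop :=
  ρ.PosSemidef ∧ ρ.trace = 1

/-- Kronecker (tensor) product of a finite family of matrices. -/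
def famKron {J : Type*} [Fintype J] {ι κ : J → Type*}
    (M : ∀ j, Matrix (ι j) (κ j) ℂ) : Matrix (∀ j, ι j) (∀ j, κ j) ℂ :=
  fun a b => ∏ j, M j (a j) (b j)

/-- The maximally entangled state `Φ₊ = (1/d) Σ_{j,k} |jj⟩⟨kk|` on `ℂ^d ⊗ ℂ^d`. -/
def maxEnt (d : ℕ) : Matrix (Fin d × Fin d) (Fin d × Fin d) ℂ :=
  fun p q => if p.1 = p.2 ∧ q.1 = q.2 then (d : ℂ)⁻¹ else 0

/-- The generalized Bell projector `(I ⊗ U) Φ₊ (I ⊗ U)†`, acting on the pair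
(ancilla A', party A), ancilla first. -/
def bellProj {d : ℕ} (U : Matrix (Fin d) (Fin d) ℂ) :
    Matrix (Fin d × Fin d) (Fin d × Fin d) ℂ :=
  ((1 : Matrix (Fin d) (Fin d) ℂ) ⊗ₖ U) * maxEnt d *
    ((1 : Matrix (Fin d) (Fin d) ℂ) ⊗ₖ U)ᴴ

/-- The state on `⊗_j (A'_j ⊗ A_j)` obtained by placing `ρ` on the `A` parts (second
components) and `⊗_j ω_j` on the ancilla `A'` parts (first components). -/
def assemble {n : ℕ} {d : Fin n → ℕ}
    (ρ : Matrix (∀ j, Fin (d j)) (∀ j, Fin (d j)) ℂ)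
    (ω : ∀ j, Matrix (Fin (d j)) (Fin (d j)) ℂ) :
    Matrix (∀ j, Fin (d j) × Fin (d j)) (∀ j, Fin (d j) × Fin (d j)) ℂ :=
  fun p q => (∏ j, ω j (p j).1 (q j).1) * ρ (fun j => (p j).2) (fun j => (q j).2)

/-- Partial trace over all the `A` parts (the second components of the pairs). -/
def ptraceA {n : ℕ} {d : Fin n → ℕ}
    (M : Matrix (∀ j, Fin (d j) × Fin (d j)) (∀ j, Fin (d j) × Fin (d j)) ℂ) :
    Matrix (∀ j, Fin (d j)) (∀ j, Fin (d j)) ℂ :=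
  fun a' b' => ∑ a : ∀ j, Fin (d j), M (fun j => (a' j, a j)) (fun j => (b' j, a j))

/-- `N_{μ;i}`: the matrix on the ancilla (`A'`) parts obtained by partially tracing out
all `A` parts of `(⊗_j Ξ_{μ,i_j}) · (ρ on A, identity on A')`. -/
def NEve {n M : ℕ} {d : Fin n → ℕ}
    (Ξ : Fin M → ∀ j, Fin ((d j) ^ 2) →
      Matrix (Fin (d j) × Fin (d j)) (Fin (d j) × Fin (d j)) ℂ)
    (ρ : Matrix (∀ j, Fin (d j)) (∀ j, Fin (d j)) ℂ)
    (μ : Fin M) (i : ∀ j, Fin ((d j) ^ 2)) :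
    Matrix (∀ j, Fin (d j)) (∀ j, Fin (d j)) ℂ :=
  ptraceA (famKron (fun j => Ξ μ j (i j)) *
    assemble ρ (fun j => (1 : Matrix (Fin (d j)) (Fin (d j)) ℂ)))

/-- The effective state
`ς = Σ_μ π(μ) Σ_i (⊗_j U_{i_j}^*) N_{μ;i} (⊗_j U_{i_j}ᵀ)` produced by Eve. -/
def sigmaEve {n M : ℕ} {d : Fin n → ℕ} (π : Fin M → ℝ)
    (Ξ : Fin M → ∀ j, Fin ((d j) ^ 2) →
      Matrix (Fin (d j) × Fin (d j)) (Fin (d j) × Fin (d j)) ℂ)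
    (U : ∀ j, Fin ((d j) ^ 2) → Matrix (Fin (d j)) (Fin (d j)) ℂ)
    (ρ : Matrix (∀ j, Fin (d j)) (∀ j, Fin (d j)) ℂ) :
    Matrix (∀ j, Fin (d j)) (∀ j, Fin (d j)) ℂ :=
  ∑ μ, (π μ : ℂ) • ∑ i : ∀ j, Fin ((d j) ^ 2),
    famKron (fun j => ((U j (i j))ᵀ)ᴴ) * NEve Ξ ρ μ i *
      famKron (fun j => (U j (i j))ᵀ)

/-- Full separability of an `n`-partite state. -/
def FullySeparable {n : ℕ} {d : Fin n → ℕ}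
    (ρ : Matrix (∀ j, Fin (d j)) (∀ j, Fin (d j)) ℂ) : Prop :=
  ∃ (M : ℕ) (w : Fin M → ℝ)
    (σ : Fin M → ∀ j, Matrix (Fin (d j)) (Fin (d j)) ℂ),
    (∀ m, 0 ≤ w m) ∧ (∑ m, w m = 1) ∧
    (∀ m j, IsDensity (σ m j)) ∧
    ρ = ∑ m, (w m : ℂ) • famKron (σ m)


section Aux

lemma famKron_mul {J : Type*} [Fintype J] [DecidableEq J] {ι κ σ : J → Type*}
    [∀ j, Fintype (κ j)] [∀ j, DecidableEq (κ j)]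
    (A : ∀ j, Matrix (ι j) (κ j) ℂ) (B : ∀ j, Matrix (κ j) (σ j) ℂ) :
    famKron A * famKron B = famKron (fun j => A j * B j) := by
  ext a b
  simp only [famKron, Matrix.mul_apply, ← Finset.prod_mul_distrib]
  rw [Finset.prod_univ_sum]
  rw [Fintype.piFinset_univ]

lemma famKron_transpose {J : Type*} [Fintype J] {ι κ : J → Type*}
    (M : ∀ j, Matrix (ι j) (κ j) ℂ) :
    (famKron M)ᵀ = famKron (fun j => (M j)ᵀ) := rfl

lemma famKron_conjTranspose {J : Type*} [Fintype J] {ι κ : J → Type*}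
    (M : ∀ j, Matrix (ι j) (κ j) ℂ) :
    (famKron M)ᴴ = famKron (fun j => (M j)ᴴ) := by
  ext a b
  simp [famKron, Matrix.conjTranspose_apply, map_prod]

def pe {n : ℕ} (d : Fin n → ℕ) :
    ((∀ j, Fin (d j)) × (∀ j, Fin (d j))) ≃ (∀ j, Fin (d j) × Fin (d j)) where
  toFun p := fun j => (p.1 j, p.2 j)
  invFun f := (fun j => (f j).1, fun j => (f j).2)
  left_inv _ := rfl
  right_inv _ := rfl

lemma mulA1 {n : ℕ} {d : Fin n → ℕ}
    (X : Matrix (∀ j, Fin (d j) × Fin (d j)) (∀ j, Fin (d j) × Fin (d j)) ℂ)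
    (ρ : Matrix (∀ j, Fin (d j)) (∀ j, Fin (d j)) ℂ)
    (p q : ∀ j, Fin (d j) × Fin (d j)) :
    (X * assemble ρ (fun _ => 1)) p q
      = ∑ r2 : ∀ j, Fin (d j),
          X p (fun j => ((q j).1, r2 j)) * ρ r2 (fun j => (q j).2) := by
  rw [Matrix.mul_apply, ← (pe d).sum_comp, Fintype.sum_prod_type]
  rw [Finset.sum_comm]
  refine Finset.sum_congr rfl fun r2 _ => ?_
  have : ∀ r1 : ∀ j, Fin (d j),
      assemble ρ (fun _ => (1 : Matrix _ _ ℂ)) (pe d (r1, r2)) q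
        = (if r1 = (fun j => (q j).1) then 1 else 0) * ρ r2 (fun j => (q j).2) := by
    intro r1
    simp only [assemble, pe, Equiv.coe_fn_mk, Matrix.one_apply, Finset.prod_boole]
    congr 1
    simp [funext_iff]
    split_ifs with h
    · exact Finset.prod_eq_one fun j _ => if_pos (h j)
    · push_neg at h
      obtain ⟨j, hj⟩ := h
      exact Finset.prod_eq_zero (Finset.mem_univ j) (if_neg hj)
  simp only [this, mul_ite, ite_mul, mul_zero, zero_mul, mul_one, one_mul, ← mul_assoc]
  rw [Finset.sum_ite_eq' Finset.univ (fun j => (q j).1)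
    (fun r1 => X p (pe d (r1, r2)) * ρ r2 fun j => (q j).2)]
  simp [pe]

lemma trace_key {n : ℕ} {d : Fin n → ℕ}
    (X : Matrix (∀ j, Fin (d j) × Fin (d j)) (∀ j, Fin (d j) × Fin (d j)) ℂ)
    (ρ : Matrix (∀ j, Fin (d j)) (∀ j, Fin (d j)) ℂ)
    (ω : ∀ j, Matrix (Fin (d j)) (Fin (d j)) ℂ) :
    (famKron ω * ptraceA (X * assemble ρ (fun _ => 1))).trace
      = (X * assemble ρ ω).trace := by
  have hL : (famKron ω * ptraceA (X * assemble ρ (fun _ => 1))).trace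
      = ∑ c : ∀ j, Fin (d j), ∑ b' : ∀ j, Fin (d j), ∑ a : ∀ j, Fin (d j),
          ∑ r2 : ∀ j, Fin (d j),
          (∏ j, ω j (c j) (b' j)) *
            (X (fun j => (b' j, a j)) (fun j => (c j, r2 j)) * ρ r2 a) := by
    have hP : ptraceA (X * assemble ρ (fun _ => 1))
        = fun b' c => ∑ a : ∀ j, Fin (d j), ∑ r2 : ∀ j, Fin (d j),
            X (fun j => (b' j, a j)) (fun j => (c j, r2 j)) * ρ r2 a := by
      funext b' c
      simp only [ptraceA, mulA1]
    rw [hP, Matrix.trace]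
    simp only [Matrix.diag_apply, Matrix.mul_apply, famKron, Finset.mul_sum]
    exact Finset.sum_congr rfl fun c _ => by
      exact Matrix.mul_apply.trans (by simp only [famKron, Finset.mul_sum])
  have hR : (X * assemble ρ ω).trace
      = ∑ b' : ∀ j, Fin (d j), ∑ a : ∀ j, Fin (d j), ∑ c : ∀ j, Fin (d j),
          ∑ r2 : ∀ j, Fin (d j),
          X (fun j => (b' j, a j)) (fun j => (c j, r2 j)) *
            ((∏ j, ω j (c j) (b' j)) * ρ r2 a) := by
    rw [Matrix.trace]
    simp only [Matrix.diag_apply, Matrix.mul_apply]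
    rw [← (pe d).sum_comp, Fintype.sum_prod_type]
    refine Finset.sum_congr rfl fun b' _ => ?_
    refine Finset.sum_congr rfl fun a _ => ?_
    rw [← (pe d).sum_comp, Fintype.sum_prod_type]
    refine Finset.sum_congr rfl fun c _ => ?_
    refine Finset.sum_congr rfl fun r2 _ => ?_
    simp [assemble, pe]
  rw [hL, hR, Finset.sum_comm]
  refine Finset.sum_congr rfl fun b' _ => ?_
  rw [Finset.sum_comm]
  refine Finset.sum_congr rfl fun a _ => ?_
  refine Finset.sum_congr rfl fun c _ => ?_
  refine Finset.sum_congr rfl fun r2 _ => ?_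
  ring

end Aux

/-- Soundness identity: for any manipulation by Eve (shared randomness `π` and local
POVMs `Ξ_{μ}^{(j)}` on the pairs `A'_j ⊗ A_j`), the MDI value equals
`tr(Wᵀ ς) = tr(W ςᵀ)` for the effective state `ς`. -/
theorem soundness_identity
    {n M : ℕ} (d : Fin n → ℕ)
    (U : ∀ j, Fin ((d j) ^ 2) → Matrix (Fin (d j)) (Fin (d j)) ℂ)
    (hU : ∀ j i, (U j i)ᴴ * U j i = 1)
    (horth : ∀ j i i', ((U j i)ᴴ * U j i').trace = if i = i' then (d j : ℂ) else 0)
    (ρ : Matrix (∀ j, Fin (d j)) (∀ j, Fin (d j)) ℂ) (hρ : IsDensity ρ)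
    (W : Matrix (∀ j, Fin (d j)) (∀ j, Fin (d j)) ℂ) (hW : W.IsHermitian)
    (τ : ∀ j, Fin ((d j) ^ 2) → Matrix (Fin (d j)) (Fin (d j)) ℂ)
    (hτ : ∀ j k, IsDensity (τ j k))
    (β : (∀ j, Fin ((d j) ^ 2)) → (∀ j, Fin ((d j) ^ 2)) → ℝ)
    (hdecomp : ∀ i, W = ∑ k : ∀ j, Fin ((d j) ^ 2),
      (β i k : ℂ) • famKron (fun j => U j (i j) * τ j (k j) * (U j (i j))ᴴ))
    (π : Fin M → ℝ) (hπ0 : ∀ μ, 0 ≤ π μ) (hπ1 : ∑ μ, π μ = 1)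
    (Ξ : Fin M → ∀ j, Fin ((d j) ^ 2) →
      Matrix (Fin (d j) × Fin (d j)) (Fin (d j) × Fin (d j)) ℂ)
    (hΞpos : ∀ μ j i, (Ξ μ j i).PosSemidef)
    (hΞsum : ∀ μ j, ∑ i, Ξ μ j i = 1) :
    (∑ i : ∀ j, Fin ((d j) ^ 2), ∑ k : ∀ j, Fin ((d j) ^ 2),
      (β i k : ℂ) *
        ((∑ μ, (π μ : ℂ) • famKron (fun j => Ξ μ j (i j))) *
          assemble ρ (fun j => (τ j (k j))ᵀ)).trace)
      = (Wᵀ * sigmaEve π Ξ U ρ).trace ∧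
    (Wᵀ * sigmaEve π Ξ U ρ).trace = (W * (sigmaEve π Ξ U ρ)ᵀ).trace := by
  constructor
  · -- main identity
    have key : ∀ (μ : Fin M) (i : ∀ j, Fin ((d j) ^ 2)),
        (Wᵀ * (famKron (fun j => ((U j (i j))ᵀ)ᴴ) * NEve Ξ ρ μ i *
          famKron (fun j => (U j (i j))ᵀ))).trace
        = ∑ k : ∀ j, Fin ((d j) ^ 2), (β i k : ℂ) *
            (famKron (fun j => Ξ μ j (i j)) *
              assemble ρ (fun j => (τ j (k j))ᵀ)).trace := by
      intro μ i
      have h1 : ∀ j, (U j (i j))ᵀ * ((U j (i j))ᴴ)ᵀ = 1 := by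
        intro j
        rw [← Matrix.transpose_mul, hU j (i j), Matrix.transpose_one]
      have hct : ∀ j, ((U j (i j))ᵀ)ᴴ = ((U j (i j))ᴴ)ᵀ := by
        intro j; ext a b; rfl
      have hKWK : famKron (fun j => (U j (i j))ᵀ) * Wᵀ *
            famKron (fun j => ((U j (i j))ᵀ)ᴴ)
          = ∑ k : ∀ j, Fin ((d j) ^ 2),
              (β i k : ℂ) • famKron (fun j => (τ j (k j))ᵀ) := by
        rw [hdecomp i, Matrix.transpose_sum, Matrix.mul_sum, Matrix.sum_mul]
        refine Finset.sum_congr rfl fun k _ => ?_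
        rw [Matrix.transpose_smul, Matrix.mul_smul, Matrix.smul_mul]
        congr 1
        rw [famKron_transpose, famKron_mul, famKron_mul]
        refine congrArg famKron (funext fun j => ?_)
        rw [hct j, Matrix.transpose_mul, Matrix.transpose_mul]
        calc (U j (i j))ᵀ * (((U j (i j))ᴴ)ᵀ * ((τ j (k j))ᵀ * (U j (i j))ᵀ)) *
              ((U j (i j))ᴴ)ᵀ
            = ((U j (i j))ᵀ * ((U j (i j))ᴴ)ᵀ) * (τ j (k j))ᵀ *
              ((U j (i j))ᵀ * ((U j (i j))ᴴ)ᵀ) := by noncomm_ring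
          _ = (τ j (k j))ᵀ := by rw [h1 j, one_mul, mul_one]
      have hassoc : Wᵀ * (famKron (fun j => ((U j (i j))ᵀ)ᴴ) * NEve Ξ ρ μ i *
            famKron (fun j => (U j (i j))ᵀ))
          = (Wᵀ * famKron (fun j => ((U j (i j))ᵀ)ᴴ) * NEve Ξ ρ μ i) *
            famKron (fun j => (U j (i j))ᵀ) := by noncomm_ring
      rw [hassoc, Matrix.trace_mul_comm]
      have hassoc2 : famKron (fun j => (U j (i j))ᵀ) *
            (Wᵀ * famKron (fun j => ((U j (i j))ᵀ)ᴴ) * NEve Ξ ρ μ i)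
          = (famKron (fun j => (U j (i j))ᵀ) * Wᵀ *
              famKron (fun j => ((U j (i j))ᵀ)ᴴ)) * NEve Ξ ρ μ i := by noncomm_ring
      rw [hassoc2, hKWK, Matrix.sum_mul, Matrix.trace_sum]
      refine Finset.sum_congr rfl fun k _ => ?_
      rw [Matrix.smul_mul, Matrix.trace_smul, smul_eq_mul]
      congr 1
      exact trace_key (famKron fun j => Ξ μ j (i j)) ρ (fun j => (τ j (k j))ᵀ)
    have expand : (Wᵀ * sigmaEve π Ξ U ρ).trace
        = ∑ μ, (π μ : ℂ) * ∑ i : ∀ j, Fin ((d j) ^ 2),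
            (Wᵀ * (famKron (fun j => ((U j (i j))ᵀ)ᴴ) * NEve Ξ ρ μ i *
              famKron (fun j => (U j (i j))ᵀ))).trace := by
      rw [sigmaEve, Matrix.mul_sum, Matrix.trace_sum]
      refine Finset.sum_congr rfl fun μ _ => ?_
      rw [Matrix.mul_smul, Matrix.trace_smul, smul_eq_mul, Matrix.mul_sum,
        Matrix.trace_sum]
    rw [expand]
    simp only [key]
    simp only [Matrix.sum_mul, Matrix.smul_mul, Matrix.trace_sum, Matrix.trace_smul,
      smul_eq_mul, Finset.mul_sum]
    have swap : ∀ (f : (∀ j, Fin ((d j) ^ 2)) → (∀ j, Fin ((d j) ^ 2)) → Fin M → ℂ),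
        (∑ i, ∑ k, ∑ μ, f i k μ) = ∑ μ, ∑ i, ∑ k, f i k μ := by
      intro f
      calc (∑ i, ∑ k, ∑ μ, f i k μ) = ∑ i, ∑ μ, ∑ k, f i k μ :=
            Finset.sum_congr rfl fun i _ => Finset.sum_comm
        _ = ∑ μ, ∑ i, ∑ k, f i k μ := Finset.sum_comm
    rw [swap (fun i k μ => (β i k : ℂ) * ((π μ : ℂ) *
      (famKron (fun j => Ξ μ j (i j)) * assemble ρ (fun j => (τ j (k j))ᵀ)).trace))]
    refine Finset.sum_congr rfl fun μ _ => ?_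
    refine Finset.sum_congr rfl fun i _ => ?_
    refine Finset.sum_congr rfl fun k _ => ?_
    ring
  · -- transpose identity
    conv_rhs => rw [← Matrix.trace_transpose (W * (sigmaEve π Ξ U ρ)ᵀ)]
    rw [Matrix.transpose_mul, Matrix.transpose_transpose, Matrix.trace_mul_comm]
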